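/- Let f be a non-negative measurable function on 𝒳 and X an 𝒳-valued random variable with m_f = E f(X) and Var(f(X)) ≤ v. Let α > 0, ε ≥ 0 and μ ∈ ℝ be such that r̄_f(μ) ≤ ε and 1 − α²v − 2αε ≥ 0. Then m_f ≤ μ + αv + 2ε. -/

import Mathlib

open MeasureTheory ProbabilityTheory Real

noncomputable section

/-- Catoni's truncation function `φ`. -/
def catoniPhi (x : ℝ) : ℝ :=
  if x < 0 then -Real.log (1 - x + x ^ 2 / 2) else Real.log (1 + x + x ^ 2 / 2)

/-- Catoni's empirical criterion `r̂_f(μ)` based on the sample `Xs`. -/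
def rhat {Ω 𝒳 : Type*} (n : ℕ) (α : ℝ) (Xs : Fin n → Ω → 𝒳)
    (f : 𝒳 → ℝ) (μ : ℝ) (ω : Ω) : ℝ :=
  (1 / (n * α)) * ∑ l, catoniPhi (α * (f (Xs l ω) - μ))

/-- The deterministic counterpart `r̄_f(μ)` of Catoni's criterion. -/
def rbar {Ω 𝒳 : Type*} [MeasurableSpace Ω] (P : Measure Ω)
    (α : ℝ) (X : Ω → 𝒳) (f : 𝒳 → ℝ) (μ : ℝ) : ℝ :=
  (1 / α) * ∫ ω, catoniPhi (α * (f (X ω) - μ)) ∂P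

lemma quad_pos_neg (x : ℝ) : 0 < 1 - x + x ^ 2 / 2 := by nlinarith [sq_nonneg (x - 1)]
lemma quad_pos_pos (x : ℝ) : 0 < 1 + x + x ^ 2 / 2 := by nlinarith [sq_nonneg (x + 1)]

lemma catoniPhi_measurable : Measurable catoniPhi := by
  unfold catoniPhi
  apply Measurable.ite (measurableSet_lt measurable_id measurable_const)
  · exact (Real.measurable_log.comp (by fun_prop)).neg
  · exact Real.measurable_log.comp (by fun_prop)

lemma catoniPhi_abs (x : ℝ) : |catoniPhi x| ≤ |x| + x ^ 2 / 2 := by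
  unfold catoniPhi
  split_ifs with h
  · have h1 : (1:ℝ) ≤ 1 - x + x ^ 2 / 2 := by nlinarith
    have h2 : 0 ≤ Real.log (1 - x + x ^ 2 / 2) := Real.log_nonneg h1
    rw [abs_neg, abs_of_nonneg h2, abs_of_neg h]
    have := Real.log_le_sub_one_of_pos (quad_pos_neg x)
    linarith
  · push_neg at h
    have h1 : (1:ℝ) ≤ 1 + x + x ^ 2 / 2 := by nlinarith
    have h2 : 0 ≤ Real.log (1 + x + x ^ 2 / 2) := Real.log_nonneg h1
    rw [abs_of_nonneg h2, abs_of_nonneg h]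
    have := Real.log_le_sub_one_of_pos (quad_pos_pos x)
    linarith

lemma catoniPhi_mono : Monotone catoniPhi := by
  intro a b hab
  unfold catoniPhi
  split_ifs with h1 h2 h2
  · have h : 1 - b + b ^ 2 / 2 ≤ 1 - a + a ^ 2 / 2 := by nlinarith
    have := Real.log_le_log (quad_pos_neg b) h
    linarith
  · push_neg at h2
    have l1 : 0 ≤ Real.log (1 - a + a ^ 2 / 2) := Real.log_nonneg (by nlinarith)
    have l2 : 0 ≤ Real.log (1 + b + b ^ 2 / 2) := Real.log_nonneg (by nlinarith)
    linarith
  · linarith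
  · push_neg at h1
    have h : 1 + a + a ^ 2 / 2 ≤ 1 + b + b ^ 2 / 2 := by nlinarith
    exact Real.log_le_log (quad_pos_pos a) h

lemma catoniPhi_lower (x : ℝ) :
    x - x ^ 2 / 2 + (if 0 ≤ x then Real.log (1 + x ^ 4 / 4) else 0) ≤ catoniPhi x := by
  unfold catoniPhi
  rcases lt_or_ge x 0 with h | h
  · rw [if_pos h, if_neg (not_le.mpr h)]
    have := Real.log_le_sub_one_of_pos (quad_pos_neg x)
    linarith
  · rw [if_neg (not_lt.mpr h), if_pos h]
    have key : Real.log (1 + x ^ 4 / 4) =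
        Real.log (1 - x + x ^ 2 / 2) + Real.log (1 + x + x ^ 2 / 2) := by
      rw [← Real.log_mul (ne_of_gt (quad_pos_neg x)) (ne_of_gt (quad_pos_pos x))]
      ring_nf
    have := Real.log_le_sub_one_of_pos (quad_pos_neg x)
    linarith

lemma arith_A (t s : ℝ) (hs : 0 ≤ s) (hD : s ≤ 1) (ht1 : t ≤ 1) (hq : 1 - s ≤ (t - 1) ^ 2) :
    t ≤ s := by
  by_contra h
  push_neg at h
  nlinarith [sq_nonneg (1 - t), mul_nonneg (sub_nonneg.mpr ht1) (sub_nonneg.mpr ht1)]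

lemma catoni_main_aux {Ω : Type*} [MeasurableSpace Ω] (P : Measure Ω) [IsProbabilityMeasure P]
    (g : Ω → ℝ) (hg : Measurable g) (hgL2 : MemLp g 2 P)
    (v : ℝ) (hv : variance g P ≤ v)
    (α : ℝ) (hα : 0 < α) (ε : ℝ) (hε : 0 ≤ ε) (μ : ℝ)
    (hrb : (∫ ω, catoniPhi (α * (g ω - μ)) ∂P) ≤ α * ε)
    (hcond : 0 ≤ 1 - α ^ 2 * v - 2 * α * ε) :
    (∫ ω, g ω ∂P) ≤ μ + α * v + 2 * ε := by
  have hgi : Integrable g P := hgL2.integrable one_le_two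
  have hg2 : Integrable (fun ω => g ω ^ 2) P :=
    (memLp_two_iff_integrable_sq hg.aestronglyMeasurable).mp hgL2
  set m : ℝ := ∫ ω, g ω ∂P with hm
  have hv0 : 0 ≤ v := le_trans (variance_nonneg g P) hv
  -- integrability helpers
  have hlin : ∀ c : ℝ, Integrable (fun ω => α * (g ω - c)) P :=
    fun c => (hgi.sub (integrable_const c)).const_mul α
  have hsq : ∀ c : ℝ, Integrable (fun ω => (α * (g ω - c)) ^ 2) P := by
    intro c
    have h1 : (fun ω => (α * (g ω - c)) ^ 2)
        = fun ω => α ^ 2 * g ω ^ 2 - (2 * α ^ 2 * c) * g ω + α ^ 2 * c ^ 2 := by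
      funext ω; ring
    rw [h1]
    exact ((hg2.const_mul _).sub (hgi.const_mul _)).add (integrable_const _)
  have habs : ∀ c : ℝ, Integrable (fun ω => |α * (g ω - c)| + (α * (g ω - c)) ^ 2 / 2) P :=
    fun c => ((hlin c).abs).add ((hsq c).div_const 2)
  have hphi_int : ∀ c : ℝ, Integrable (fun ω => catoniPhi (α * (g ω - c))) P := by
    intro c
    refine Integrable.mono' (habs c) ?_ ?_
    · exact (catoniPhi_measurable.comp (by fun_prop)).aestronglyMeasurable
    · exact Filter.Eventually.of_forall fun ω => catoniPhi_abs _
  have hH_nonneg : ∀ (c : ℝ) (ω : Ω),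
      0 ≤ (if 0 ≤ α * (g ω - c) then Real.log (1 + (α * (g ω - c)) ^ 4 / 4) else 0) := by
    intro c ω
    split_ifs with h
    · apply Real.log_nonneg
      nlinarith [sq_nonneg ((α * (g ω - c)) ^ 2)]
    · exact le_refl 0
  have hH_int : ∀ c : ℝ, Integrable
      (fun ω => if 0 ≤ α * (g ω - c) then Real.log (1 + (α * (g ω - c)) ^ 4 / 4) else 0) P := by
    intro c
    refine Integrable.mono' ((habs c).const_mul 2) ?_ ?_
    · apply Measurable.aestronglyMeasurable
      apply Measurable.ite (measurableSet_le measurable_const (by fun_prop))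
      · exact Real.measurable_log.comp (by fun_prop)
      · exact measurable_const
    · refine Filter.Eventually.of_forall fun ω => ?_
      rw [Real.norm_eq_abs, abs_of_nonneg (hH_nonneg c ω)]
      have h1 := catoniPhi_lower (α * (g ω - c))
      have h2 := abs_le.mp (catoniPhi_abs (α * (g ω - c)))
      have h4 := le_abs_self (α * (g ω - c))
      have h5 := neg_abs_le (α * (g ω - c))
      linarith [h2.1, h2.2]
  -- evaluation of the second moment
  have hvar : variance g P = (∫ ω, g ω ^ 2 ∂P) - m ^ 2 := by
    simpa only [Pi.pow_apply] using variance_eq_sub hgL2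
  have hsq_eval : ∀ c : ℝ,
      (∫ ω, (α * (g ω - c)) ^ 2 ∂P) = α ^ 2 * (variance g P + (m - c) ^ 2) := by
    intro c
    have h1 : (fun ω => (α * (g ω - c)) ^ 2)
        = fun ω => α ^ 2 * g ω ^ 2 - (2 * α ^ 2 * c) * g ω + α ^ 2 * c ^ 2 := by
      funext ω; ring
    have iA : Integrable (fun ω => α ^ 2 * g ω ^ 2) P := hg2.const_mul _
    have iB : Integrable (fun ω => 2 * α ^ 2 * c * g ω) P := hgi.const_mul _
    have iAB : Integrable (fun ω => α ^ 2 * g ω ^ 2 - 2 * α ^ 2 * c * g ω) P := iA.sub iB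
    rw [h1, integral_add iAB (integrable_const _), integral_sub iA iB, integral_const_mul,
      integral_const_mul, integral_const]
    simp only [probReal_univ, smul_eq_mul, one_mul]
    rw [hvar]
    ring
  -- the key lower bound on the integral of catoniPhi
  have hkey : ∀ c : ℝ,
      α * (m - c) - α ^ 2 * (variance g P + (m - c) ^ 2) / 2
        + (∫ ω, (if 0 ≤ α * (g ω - c) then Real.log (1 + (α * (g ω - c)) ^ 4 / 4) else 0) ∂P)
      ≤ ∫ ω, catoniPhi (α * (g ω - c)) ∂P := by
    intro c
    have iD : Integrable (fun ω => (α * (g ω - c)) ^ 2 / 2) P := (hsq c).div_const 2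
    have iL : Integrable (fun ω => α * (g ω - c) - (α * (g ω - c)) ^ 2 / 2) P :=
      (hlin c).sub iD
    have iLH : Integrable (fun ω => α * (g ω - c) - (α * (g ω - c)) ^ 2 / 2
        + (if 0 ≤ α * (g ω - c) then Real.log (1 + (α * (g ω - c)) ^ 4 / 4) else 0)) P :=
      iL.add (hH_int c)
    have hmono := integral_mono iLH (hphi_int c) (fun ω => catoniPhi_lower (α * (g ω - c)))
    rw [integral_add iL (hH_int c), integral_sub (hlin c) iD, integral_div, hsq_eval c,
      integral_const_mul, integral_sub hgi (integrable_const c), integral_const] at hmono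
    simp only [probReal_univ, one_mul, smul_eq_mul] at hmono
    linarith [hmono]
  -- case split
  by_cases hcase : m - μ ≤ 1 / α
  · -- small deviation case
    have hk := hkey μ
    have hEH : 0 ≤ ∫ ω, (if 0 ≤ α * (g ω - μ) then Real.log (1 + (α * (g ω - μ)) ^ 4 / 4) else 0) ∂P :=
      integral_nonneg (hH_nonneg μ)
    have hA : α * (m - μ) - α ^ 2 * (v + (m - μ) ^ 2) / 2 ≤ α * ε := by
      nlinarith [hk, hrb, hEH, sq_nonneg α]
    have ht1 : α * (m - μ) ≤ 1 := by
      have := (le_div_iff₀ hα).mp hcase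
      linarith
    have hs0 : 0 ≤ α ^ 2 * v + 2 * α * ε := by positivity
    have hq : 1 - (α ^ 2 * v + 2 * α * ε) ≤ (α * (m - μ) - 1) ^ 2 := by nlinarith [hA]
    have := arith_A (α * (m - μ)) (α ^ 2 * v + 2 * α * ε) hs0 (by linarith) ht1 hq
    have hfin : α * (m - μ) ≤ α * (α * v + 2 * ε) := by nlinarith [this]
    have := (mul_le_mul_iff_right₀ hα).mp hfin
    linarith
  · -- large deviation case : contradiction
    exfalso
    push_neg at hcase
    set c : ℝ := m - 1 / α with hc
    have hμc : μ ≤ c := by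
      have : 1 / α < m - μ := hcase
      simp only [hc]; linarith
    have hptwise : ∀ ω, catoniPhi (α * (g ω - c)) ≤ catoniPhi (α * (g ω - μ)) := by
      intro ω
      apply catoniPhi_mono
      have : g ω - c ≤ g ω - μ := by linarith
      exact mul_le_mul_of_nonneg_left this hα.le
    have hint2 : (∫ ω, catoniPhi (α * (g ω - c)) ∂P) ≤ α * ε :=
      le_trans (integral_mono (hphi_int c) (hphi_int μ) hptwise) hrb
    have hk := hkey c
    have hmc : m - c = 1 / α := by simp only [hc]; ring
    have hEH2 : (∫ ω, (if 0 ≤ α * (g ω - c) then Real.log (1 + (α * (g ω - c)) ^ 4 / 4) else 0) ∂P) ≤ 0 := by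
      have e1 : α * (m - c) = 1 := by
        rw [hmc]; field_simp
      have e2 : α ^ 2 * (variance g P + (m - c) ^ 2) ≤ α ^ 2 * v + 1 := by
        rw [hmc]
        have : (1 / α) ^ 2 = 1 / α ^ 2 := by field_simp
        rw [this]
        have hα2 : (0:ℝ) < α ^ 2 := by positivity
        have : α ^ 2 * (variance g P + 1 / α ^ 2) = α ^ 2 * variance g P + 1 := by
          field_simp
        rw [this]
        nlinarith [hv, hα2]
      rw [e1] at hk
      have hk2 : 1 - (α ^ 2 * v + 1) / 2
          + (∫ ω, (if 0 ≤ α * (g ω - c) then Real.log (1 + (α * (g ω - c)) ^ 4 / 4) else 0) ∂P)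
          ≤ α * ε := by
        set B := α ^ 2 * (variance g P + (m - c) ^ 2) with hB
        set EH := (∫ ω, (if 0 ≤ α * (g ω - c) then Real.log (1 + (α * (g ω - c)) ^ 4 / 4) else 0) ∂P) with hEH
        linarith [hk, hint2, e2]
      linarith [hk2, hcond]
    have hEH0 : (∫ ω, (if 0 ≤ α * (g ω - c) then Real.log (1 + (α * (g ω - c)) ^ 4 / 4) else 0) ∂P) = 0 :=
      le_antisymm hEH2 (integral_nonneg (hH_nonneg c))
    have hae : ∀ᵐ ω ∂P, (if 0 ≤ α * (g ω - c) then Real.log (1 + (α * (g ω - c)) ^ 4 / 4) else 0) = 0 := by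
      have h0 := (integral_eq_zero_iff_of_nonneg (hH_nonneg c) (hH_int c)).mp hEH0
      filter_upwards [h0] with ω hω using hω
    have hle : ∀ᵐ ω ∂P, g ω ≤ c := by
      filter_upwards [hae] with ω hω
      by_contra hgt
      push_neg at hgt
      have hx : 0 < α * (g ω - c) := by
        apply mul_pos hα; linarith
      rw [if_pos hx.le] at hω
      have h1 : (0:ℝ) < (α * (g ω - c)) ^ 4 / 4 := by positivity
      have := Real.log_pos (by linarith : (1:ℝ) < 1 + (α * (g ω - c)) ^ 4 / 4)
      linarith
    have hmle : m ≤ c := by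
      have := integral_mono_ae hgi (integrable_const c) hle
      rwa [integral_const, probReal_univ, one_smul] at this
    rw [hc] at hmle
    have hpos : 0 < 1 / α := by positivity
    linarith

/-- Lemma 3.1 (third part): if `r̄_f(μ) ≤ ε` and `1 - α²v - 2αε ≥ 0`, then
`m_f ≤ μ + αv + 2ε`. -/
theorem stmt_4 {Ω 𝒳 : Type*} [MeasurableSpace Ω] [MeasurableSpace 𝒳]
    (P : Measure Ω) [IsProbabilityMeasure P]
    (X : Ω → 𝒳) (hX : Measurable X)
    (f : 𝒳 → ℝ) (hfm : Measurable f) (hf0 : ∀ x, 0 ≤ f x)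
    (hfL2 : MemLp (fun ω => f (X ω)) 2 P)
    (v : ℝ) (hv : variance (fun ω => f (X ω)) P ≤ v)
    (α : ℝ) (hα : 0 < α) (ε : ℝ) (hε : 0 ≤ ε) (μ : ℝ)
    (hrb : rbar P α X f μ ≤ ε) (hcond : 0 ≤ 1 - α ^ 2 * v - 2 * α * ε) :
    (∫ ω, f (X ω) ∂P) ≤ μ + α * v + 2 * ε := by
  have hrb' : (∫ ω, catoniPhi (α * (f (X ω) - μ)) ∂P) ≤ α * ε := by
    have h := hrb
    unfold rbar at h
    have h2 := mul_le_mul_of_nonneg_left h hα.le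
    rw [← mul_assoc, mul_one_div, div_self (ne_of_gt hα), one_mul] at h2
    exact h2
  exact catoni_main_aux P (fun ω => f (X ω)) (hfm.comp hX) hfL2 v hv α hα ε hε μ hrb' hcond
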